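/- (Lemma 2) Let F be a field, m,t,r positive integers, H ∈ F^{r×mt} an encoder matrix with blocks H_1,…,H_m ∈ F^{r×t}, and L ⊆ {1,…,m} with |L| ≥ 2. Suppose that rank H_{L\{j}} = (|L|−1)·t for every j ∈ L (as holds when L is a minimal cyclic set and the decoding conditions are met), and that rank H_L = (|L|−1)·t. Then for every l ∈ L there exist t×t matrices M_{l,j} ∈ F^{t×t}, j ∈ L\{l}, such that H_l = Σ_{j∈L\{l}} H_j M_{l,j} and every matrix M_{l,j} is invertible. -/

import Mathlib

open Matrix

/-- The rank of the `r × |L|t` matrix formed by horizontally concatenating the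
blocks `H l`, `l ∈ L`, of the block encoder matrix `H = [H_1 | ⋯ | H_m]`. -/
noncomputable def blockRank {F : Type} [Field F] {m r t : ℕ}
    (H : Fin m → Matrix (Fin r) (Fin t) F) (L : Finset (Fin m)) : ℕ :=
  Matrix.rank (Matrix.of fun (k : Fin r) (p : {l // l ∈ L} × Fin t) => H p.1.1 k p.2)

namespace StmtAux

variable {F : Type} [Field F] {m r t : ℕ}

/-- The concatenated block matrix. -/
def blk (H : Fin m → Matrix (Fin r) (Fin t) F) (S : Finset (Fin m)) :
    Matrix (Fin r) ({l // l ∈ S} × Fin t) F :=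
  Matrix.of fun k p => H p.1.1 k p.2

lemma blockRank_eq (H : Fin m → Matrix (Fin r) (Fin t) F) (S : Finset (Fin m)) :
    blockRank H S = (blk H S).rank := rfl

/-- Extend a coefficient vector by zero. -/
def ext (S : Finset (Fin m)) (x : {l // l ∈ S} × Fin t → F) (j : Fin m) (p : Fin t) : F :=
  if h : j ∈ S then x (⟨j, h⟩, p) else 0

lemma ext_mem {S : Finset (Fin m)} (x : {l // l ∈ S} × Fin t → F) {j : Fin m}
    (h : j ∈ S) (p : Fin t) : ext S x j p = x (⟨j, h⟩, p) := dif_pos h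

lemma mulVecLin_blk (H : Fin m → Matrix (Fin r) (Fin t) F) (S : Finset (Fin m))
    (x : {l // l ∈ S} × Fin t → F) (k : Fin r) :
    (blk H S).mulVecLin x k = ∑ j ∈ S, ∑ p, H j k p * ext S x j p := by
  rw [← Finset.sum_attach S (fun j => ∑ p, H j k p * ext S x j p)]
  rw [Matrix.mulVecLin_apply]
  show ∑ jp : {l // l ∈ S} × Fin t, blk H S k jp * x jp = _
  rw [Fintype.sum_prod_type, ← Finset.univ_eq_attach]
  refine Finset.sum_congr rfl fun j _ => Finset.sum_congr rfl fun p _ => ?_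
  rw [ext_mem x j.2]
  rfl

lemma card_eq (S : Finset (Fin m)) :
    Fintype.card ({l // l ∈ S} × Fin t) = S.card * t := by
  simp [Fintype.card_prod]

lemma injective_of_rank (H : Fin m → Matrix (Fin r) (Fin t) F) (S : Finset (Fin m))
    (h : (blk H S).rank = S.card * t) :
    Function.Injective (blk H S).mulVecLin := by
  rw [← LinearMap.ker_eq_bot]
  have h2 := LinearMap.finrank_range_add_finrank_ker ((blk H S).mulVecLin)
  rw [Module.finrank_fintype_fun_eq_card, card_eq] at h2
  have : (blk H S).rank = Module.finrank F (LinearMap.range (blk H S).mulVecLin) := rfl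
  rw [← this, h] at h2
  have hker : Module.finrank F (LinearMap.ker (blk H S).mulVecLin) = 0 := by omega
  exact Submodule.finrank_eq_zero.mp hker

end StmtAux

open StmtAux in
theorem stmt3 {F : Type} [Field F] (m t r : ℕ) (hm : 0 < m) (ht : 0 < t) (hr : 0 < r)
    (H : Fin m → Matrix (Fin r) (Fin t) F)
    (L : Finset (Fin m)) (hL : 2 ≤ L.card)
    (herase : ∀ j ∈ L, blockRank H (L.erase j) = (L.card - 1) * t)
    (hrank : blockRank H L = (L.card - 1) * t) :
    ∀ l ∈ L, ∃ M : Fin m → Matrix (Fin t) (Fin t) F,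
      H l = ∑ j ∈ L.erase l, H j * M j ∧ ∀ j ∈ L.erase l, IsUnit (M j) := by
  intro l hl
  -- Step 1: ranges are equal
  have hle : LinearMap.range (blk H (L.erase l)).mulVecLin ≤
      LinearMap.range (blk H L).mulVecLin := by
    rintro - ⟨x, rfl⟩
    refine ⟨fun jp => ext (L.erase l) x jp.1.1 jp.2, ?_⟩
    funext k
    rw [mulVecLin_blk, mulVecLin_blk]
    rw [← Finset.sum_erase_add L _ hl]
    have hz : ∑ p, H l k p * ext L (fun jp => ext (L.erase l) x jp.1.1 jp.2) l p = 0 := by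
      have h0 : ∀ p, ext L (fun jp => ext (L.erase l) x jp.1.1 jp.2) l p = 0 := by
        intro p
        rw [ext_mem _ hl]
        exact dif_neg (Finset.notMem_erase l L)
      simp [h0]
    rw [hz, add_zero]
    refine Finset.sum_congr rfl fun j hj => Finset.sum_congr rfl fun p _ => ?_
    have hjL : j ∈ L := Finset.mem_of_mem_erase hj
    rw [ext_mem _ hjL, ext_mem _ hj]
  have hfr : LinearMap.range (blk H (L.erase l)).mulVecLin =
      LinearMap.range (blk H L).mulVecLin := by
    apply Submodule.eq_of_le_of_finrank_eq hle
    show Module.finrank F _ = Module.finrank F _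
    have h1 : blockRank H (L.erase l) = Module.finrank F
        (LinearMap.range (blk H (L.erase l)).mulVecLin) := rfl
    have h2 : blockRank H L = Module.finrank F
        (LinearMap.range (blk H L).mulVecLin) := rfl
    rw [← h1, ← h2, herase l hl, hrank]
  -- Step 2: columns of H l are in the range
  have hcol : ∀ q : Fin t, ∃ x : {j // j ∈ L.erase l} × Fin t → F,
      (blk H (L.erase l)).mulVecLin x = fun k => H l k q := by
    intro q
    have : (fun k => H l k q) ∈ LinearMap.range (blk H L).mulVecLin := by
      rw [Matrix.range_mulVecLin]
      exact Submodule.subset_span ⟨(⟨l, hl⟩, q), rfl⟩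
    rw [← hfr] at this
    exact this
  choose x hx using hcol
  -- Step 3: define the coefficients
  set Mm : Fin m → Matrix (Fin t) (Fin t) F :=
    fun j => Matrix.of fun p q => ext (L.erase l) (x q) j p with hMm
  have hHl : H l = ∑ j ∈ L.erase l, H j * Mm j := by
    funext k q
    have h1 : H l k q = (blk H (L.erase l)).mulVecLin (x q) k := (congrFun (hx q) k).symm
    rw [h1, mulVecLin_blk]
    simp only [Matrix.sum_apply, Matrix.mul_apply]
    rfl
  refine ⟨Mm, hHl, ?_⟩
  -- Step 4: invertibility
  intro j0 hj0
  by_contra hunit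
  rw [Matrix.isUnit_iff_isUnit_det, isUnit_iff_ne_zero, not_ne_iff] at hunit
  obtain ⟨v, hv0, hv⟩ := Matrix.exists_mulVec_eq_zero_iff.mpr hunit
  have hj0L : j0 ∈ L := Finset.mem_of_mem_erase hj0
  have hlj0 : l ∈ L.erase j0 :=
    Finset.mem_erase.mpr ⟨Ne.symm (Finset.mem_erase.mp hj0).1, hl⟩
  have hinj : Function.Injective (blk H (L.erase j0)).mulVecLin := by
    apply injective_of_rank
    rw [← blockRank_eq, herase j0 hj0L, Finset.card_erase_of_mem hj0L]
  set z : Fin m → Fin t → F := fun j p => if j = l then v p else -((Mm j *ᵥ v) p) with hzdef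
  set y : {j // j ∈ L.erase j0} × Fin t → F := fun jp => z jp.1.1 jp.2 with hydef
  have hBy : (blk H (L.erase j0)).mulVecLin y = 0 := by
    funext k
    rw [mulVecLin_blk]
    have step1 : ∑ j ∈ L.erase j0, ∑ p, H j k p * ext (L.erase j0) y j p
        = ∑ j ∈ L.erase j0, ∑ p, H j k p * z j p :=
      Finset.sum_congr rfl fun j hj => Finset.sum_congr rfl fun p _ => by
        rw [ext_mem _ hj]
    rw [step1, ← Finset.sum_erase_add _ _ hlj0]
    have hzl : ∀ p, z l p = v p := fun p => if_pos rfl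
    have hlast : ∑ p, H l k p * z l p = ∑ j ∈ L.erase l, ((H j * Mm j) *ᵥ v) k := by
      have h1 : ∑ p, H l k p * z l p = (H l *ᵥ v) k := by
        simp only [hzl]; rfl
      rw [h1, hHl]
      simp only [Matrix.mulVec, dotProduct, Matrix.sum_apply, Finset.sum_mul]
      exact Finset.sum_comm
    have hmid : ∀ j ∈ (L.erase j0).erase l,
        ∑ p, H j k p * z j p = -(((H j * Mm j) *ᵥ v) k) := by
      intro j hj
      have hne : j ≠ l := (Finset.mem_erase.mp hj).1
      have hzj : ∀ p, z j p = -((Mm j *ᵥ v) p) := fun p => if_neg hne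
      calc ∑ p, H j k p * z j p
          = ∑ p, -(H j k p * (Mm j *ᵥ v) p) := by simp only [hzj, mul_neg]
        _ = -∑ p, H j k p * (Mm j *ᵥ v) p := Finset.sum_neg_distrib _
        _ = -(((H j * Mm j) *ᵥ v) k) := by rw [← Matrix.mulVec_mulVec]; rfl
    rw [Finset.sum_congr rfl hmid, hlast]
    have hg0 : ((H j0 * Mm j0) *ᵥ v) k = 0 := by
      rw [← Matrix.mulVec_mulVec, hv]
      simp
    rw [Finset.sum_neg_distrib, Finset.erase_right_comm,
      ← Finset.sum_erase_add (L.erase l) _ hj0, hg0, add_zero]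
    simp
  have hy0 : y = 0 := hinj (by rw [hBy, map_zero])
  apply hv0
  funext p
  have := congrFun hy0 (⟨l, hlj0⟩, p)
  simpa [hydef, hzdef] using this
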